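/- Let k ≥ 1 and let S_1, …, S_k ⊆ ℝ^d be segments (each S_i is the convex hull of two points). Let D be a Borel probability distribution on ℝ^d supported on S_1 ∪ ⋯ ∪ S_k, and let X_1, …, X_T be independent draws from D. Then the expected number of indices t ∈ {1, …, T} for which X_t does not lie in the convex hull of {X_1, …, X_{t−1}} is at most 2k(1 + ln T). -/

import Mathlib

open MeasureTheory
open scoped ENNReal

namespace Stmt7Aux

variable {d : ℕ}

noncomputable def dotp (w y : Fin d → ℝ) : ℝ := ∑ j, w j * y j

lemma dotp_line (w u : Fin d → ℝ) (a : ℝ) :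
    dotp w (u + a • w) = dotp w u + a * dotp w w := by
  simp only [dotp, Pi.add_apply, Pi.smul_apply, smul_eq_mul, mul_add,
    Finset.sum_add_distrib, Finset.mul_sum]
  congr 1
  exact Finset.sum_congr rfl fun j _ => by ring

lemma dotp_self_nonneg (w : Fin d → ℝ) : 0 ≤ dotp w w :=
  Finset.sum_nonneg fun j _ => mul_self_nonneg _

lemma eq_zero_of_dotp_self (w : Fin d → ℝ) (h : dotp w w = 0) : w = 0 := by
  funext j
  have := (Finset.sum_eq_zero_iff_of_nonneg
    (fun j _ => mul_self_nonneg (w j))).1 h j (Finset.mem_univ j)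
  exact mul_self_eq_zero.1 this

lemma mem_segment_of_dotp_between {u v p q x : Fin d → ℝ}
    (hp : p ∈ segment ℝ u v) (hq : q ∈ segment ℝ u v) (hx : x ∈ segment ℝ u v)
    (h1 : dotp (v - u) p ≤ dotp (v - u) x) (h2 : dotp (v - u) x ≤ dotp (v - u) q) :
    x ∈ segment ℝ p q := by
  rw [segment_eq_image'] at hp hq hx
  obtain ⟨a, ha, rfl⟩ := hp
  obtain ⟨b, hb, rfl⟩ := hq
  obtain ⟨c, hc, rfl⟩ := hx
  set w := v - u with hw
  rw [dotp_line, dotp_line] at h1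
  rw [dotp_line, dotp_line] at h2
  by_cases hD : dotp w w = 0
  · have hw0 : w = 0 := eq_zero_of_dotp_self w hD
    simp only [hw0, smul_zero, add_zero]
    exact left_mem_segment ℝ _ _
  · have hDpos : 0 < dotp w w := lt_of_le_of_ne (dotp_self_nonneg w) (Ne.symm hD)
    have hac : a ≤ c := by nlinarith
    have hcb : c ≤ b := by nlinarith
    by_cases hab : b ≤ a
    · have hca : a = c := le_antisymm hac (hcb.trans hab)
      rw [← hca]
      exact left_mem_segment ℝ _ _
    · push_neg at hab
      have hba : (0:ℝ) < b - a := by linarith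
      set θ := (c - a)/(b - a) with hθ
      refine ⟨1 - θ, θ,
        by rw [sub_nonneg, hθ, div_le_one hba]; linarith,
        div_nonneg (by linarith) hba.le, by ring, ?_⟩
      have hcoef : c = (1 - θ) * a + θ * b := by
        rw [hθ]; field_simp; ring
      rw [hcoef]
      module


variable {T : ℕ}

lemma measurePreserving_perm {α : Type*} [MeasurableSpace α] (D : Measure α)
    [SigmaFinite D] (σ : Equiv.Perm (Fin T)) :
    MeasurePreserving (fun X : Fin T → α => X ∘ σ)
      (Measure.pi fun _ => D) (Measure.pi fun _ => D) := by
  have hm : Measurable (fun X : Fin T → α => X ∘ σ) :=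
    measurable_pi_lambda _ fun i => measurable_pi_apply (σ i)
  refine ⟨hm, ?_⟩
  symm
  refine Measure.pi_eq fun s hs => ?_
  rw [Measure.map_apply hm (MeasurableSet.univ_pi hs)]
  have hpre : (fun X : Fin T → α => X ∘ σ) ⁻¹' Set.pi Set.univ s
      = Set.pi Set.univ (fun i => s (σ.symm i)) := by
    ext X
    simp only [Set.mem_preimage, Set.mem_pi, Set.mem_univ, forall_true_left,
      Function.comp_apply]
    constructor
    · intro h i
      have := h (σ.symm i)
      rwa [Equiv.apply_symm_apply] at this
    · intro h i
      have := h (σ i)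
      rwa [Equiv.symm_apply_apply] at this
  rw [hpre, Measure.pi_pi]
  exact Equiv.prod_comp σ.symm (fun i => D (s i))

/-- event: index `j` is the strict max (w.r.t. `f`) among indices `≤ t` landing in `S`,
and moreover `X j ∈ S`. -/
def maxEv (S : Set (Fin d → ℝ)) (f : (Fin d → ℝ) → ℝ) (t j : Fin T) :
    Set (Fin T → (Fin d → ℝ)) :=
  {X | X j ∈ S ∧ ∀ s, s ≤ t → s ≠ j → X s ∈ S → f (X s) < f (X j)}

lemma measurableSet_maxEv {S : Set (Fin d → ℝ)} {f : (Fin d → ℝ) → ℝ}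
    (hS : MeasurableSet S) (hf : Measurable f) (t j : Fin T) :
    MeasurableSet (maxEv S f t j) := by
  have hrw : maxEv S f t j = ((fun X : Fin T → (Fin d → ℝ) => X j) ⁻¹' S) ∩
      ⋂ (s : Fin T), ⋂ (_ : s ≤ t), ⋂ (_ : s ≠ j),
        (((fun X : Fin T → (Fin d → ℝ) => X s) ⁻¹' S)ᶜ ∪
          {X : Fin T → (Fin d → ℝ) | f (X s) < f (X j)}) := by
    ext X
    simp only [maxEv, Set.mem_setOf_eq, Set.mem_inter_iff, Set.mem_preimage,
      Set.mem_iInter, Set.mem_union, Set.mem_compl_iff]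
    refine and_congr_right fun _ => ?_
    constructor
    · intro h s hs hsj
      by_cases hXS : X s ∈ S
      · exact Or.inr (h s hs hsj hXS)
      · exact Or.inl hXS
    · intro h s hs hsj hXS
      rcases h s hs hsj with h' | h'
      · exact absurd hXS h'
      · exact h'
  rw [hrw]
  refine (hS.preimage (measurable_pi_apply j)).inter ?_
  refine MeasurableSet.iInter fun s => MeasurableSet.iInter fun _ =>
    MeasurableSet.iInter fun _ => ?_
  exact ((hS.preimage (measurable_pi_apply s)).compl).union
    (measurableSet_lt (hf.comp (measurable_pi_apply s)) (hf.comp (measurable_pi_apply j)))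

lemma preimage_swap_maxEv (S : Set (Fin d → ℝ)) (f : (Fin d → ℝ) → ℝ)
    {t j : Fin T} (hj : j ≤ t) (hjt : j ≠ t) :
    (fun X : Fin T → (Fin d → ℝ) => X ∘ (Equiv.swap j t)) ⁻¹' (maxEv S f t t)
      = maxEv S f t j := by
  ext X
  simp only [Set.mem_preimage, maxEv, Set.mem_setOf_eq, Function.comp_apply,
    Equiv.swap_apply_right]
  constructor
  · rintro ⟨h1, h2⟩
    refine ⟨h1, fun s hs hsj hsS => ?_⟩
    by_cases hst : s = t
    · subst hst
      have := h2 j hj hjt (by rwa [Equiv.swap_apply_left])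
      rwa [Equiv.swap_apply_left] at this
    · have := h2 s hs hst (by rwa [Equiv.swap_apply_of_ne_of_ne hsj hst])
      rwa [Equiv.swap_apply_of_ne_of_ne hsj hst] at this
  · rintro ⟨h1, h2⟩
    refine ⟨h1, fun s hs hst hsS => ?_⟩
    by_cases hsj : s = j
    · subst hsj
      rw [Equiv.swap_apply_left] at hsS ⊢
      exact h2 t le_rfl (Ne.symm hjt) hsS
    · rw [Equiv.swap_apply_of_ne_of_ne hsj hst] at hsS ⊢
      exact h2 s hs hsj hsS

lemma measure_maxEv_le (D : Measure (Fin d → ℝ)) [IsProbabilityMeasure D]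
    {S : Set (Fin d → ℝ)} {f : (Fin d → ℝ) → ℝ}
    (hS : MeasurableSet S) (hf : Measurable f) (t : Fin T) :
    (Measure.pi fun _ : Fin T => D) (maxEv S f t t)
      ≤ ((((t : ℕ) + 1 : ℕ) : ℝ≥0∞))⁻¹ := by
  set μ := Measure.pi fun _ : Fin T => D with hμ
  have hmeas : ∀ j : Fin T, MeasurableSet (maxEv S f t j) :=
    fun j => measurableSet_maxEv hS hf t j
  have heq : ∀ j ∈ Finset.Iic t, μ (maxEv S f t j) = μ (maxEv S f t t) := by
    intro j hj
    by_cases hjt : j = t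
    · rw [hjt]
    · have h := (measurePreserving_perm D (Equiv.swap j t)).measure_preimage
        (hmeas t).nullMeasurableSet
      rwa [preimage_swap_maxEv S f (Finset.mem_Iic.mp hj) hjt] at h
  have hdisj : Set.PairwiseDisjoint (Finset.Iic t : Set (Fin T))
      (fun j => maxEv S f t j) := by
    intro j hj j' hj' hne
    simp only [Function.onFun]
    rw [Set.disjoint_left]
    intro X hX hX'
    simp only [Finset.coe_Iic, Set.mem_Iic] at hj hj'
    have l1 := hX.2 j' hj' (Ne.symm hne) hX'.1
    have l2 := hX'.2 j hj hne hX.1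
    exact lt_asymm l1 l2
  have hsum := measure_biUnion_finset (μ := μ) hdisj (fun j _ => hmeas j)
  have hcard : (Finset.Iic t).card = (t : ℕ) + 1 := Fin.card_Iic t
  have hle1 : ((((t : ℕ) + 1 : ℕ) : ℝ≥0∞)) * μ (maxEv S f t t) ≤ 1 := by
    calc ((((t : ℕ) + 1 : ℕ) : ℝ≥0∞)) * μ (maxEv S f t t)
        = ∑ j ∈ Finset.Iic t, μ (maxEv S f t t) := by
          rw [Finset.sum_const, hcard, nsmul_eq_mul]
      _ = ∑ j ∈ Finset.Iic t, μ (maxEv S f t j) :=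
          Finset.sum_congr rfl fun j hj => (heq j hj).symm
      _ = μ (⋃ j ∈ Finset.Iic t, maxEv S f t j) := hsum.symm
      _ ≤ 1 := prob_le_one
  rw [ENNReal.le_inv_iff_mul_le]
  rwa [mul_comm]

end Stmt7Aux

open MeasureTheory Stmt7Aux
open scoped ENNReal

open Classical in
/-- Theorem 3.10 (LearnHull): if `D` is a probability distribution supported on
a union of `k` segments in `ℝ^d` and `X_1, …, X_T` are i.i.d. draws from `D`,
then the expected number of days `t` on which `X_t` falls outside the convex
hull of the previous draws is at most `2k(1 + ln T)`. -/
theorem stmt_7 {d k T : ℕ} (hk : 1 ≤ k)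
    (u v : Fin k → (Fin d → ℝ))
    (D : Measure (Fin d → ℝ)) [IsProbabilityMeasure D]
    (hsupp : D (⋃ i, segment ℝ (u i) (v i)) = 1) :
    ∫ X : Fin T → (Fin d → ℝ),
        ((Finset.univ.filter fun t : Fin T =>
          X t ∉ convexHull ℝ (X '' {s : Fin T | s < t})).card : ℝ)
      ∂(Measure.pi fun _ : Fin T => D) ≤ 2 * k * (1 + Real.log T) := by
  set μ := Measure.pi fun _ : Fin T => D with hμdef
  set S : Fin k → Set (Fin d → ℝ) := fun i => segment ℝ (u i) (v i) with hS
  set f : Fin k → (Fin d → ℝ) → ℝ := fun i y => dotp (v i - u i) y with hf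
  have hSmeas : ∀ i, MeasurableSet (S i) := by
    intro i
    show MeasurableSet (segment ℝ (u i) (v i))
    rw [← convexHull_pair]
    exact ((Set.finite_singleton (v i)).insert
      (u i)).isCompact_convexHull ℝ |>.isClosed.measurableSet
  have hfmeas : ∀ i, Measurable (f i) := by
    intro i
    show Measurable fun y : Fin d → ℝ => ∑ j, (v i - u i) j * y j
    exact Finset.measurable_sum _ fun j _ => (measurable_pi_apply j).const_mul _
  set A : Fin T → Fin k → Set (Fin T → (Fin d → ℝ)) :=
    fun t i => maxEv (S i) (f i) t t with hA
  set B : Fin T → Fin k → Set (Fin T → (Fin d → ℝ)) :=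
    fun t i => maxEv (S i) (fun y => -(f i y)) t t with hB
  have hAmeas : ∀ t i, MeasurableSet (A t i) :=
    fun t i => measurableSet_maxEv (hSmeas i) (hfmeas i) t t
  have hBmeas : ∀ t i, MeasurableSet (B t i) :=
    fun t i => measurableSet_maxEv (hSmeas i) (hfmeas i).neg t t
  have htoReal : ∀ (s : Set (Fin T → (Fin d → ℝ))) (t : Fin T),
      μ s ≤ ((((t : ℕ) + 1 : ℕ) : ℝ≥0∞))⁻¹ → (μ s).toReal ≤ (((t : ℕ) : ℝ) + 1)⁻¹ := by
    intro s t h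
    have hne : ((((t : ℕ) + 1 : ℕ) : ℝ≥0∞))⁻¹ ≠ ⊤ :=
      ENNReal.inv_ne_top.2 (by exact_mod_cast Nat.succ_ne_zero (t : ℕ))
    have h2 := ENNReal.toReal_mono hne h
    rw [ENNReal.toReal_inv, ENNReal.toReal_natCast] at h2
    push_cast at h2
    exact h2
  have hAle : ∀ t i, (μ (A t i)).toReal ≤ (((t : ℕ) : ℝ) + 1)⁻¹ :=
    fun t i => htoReal _ t (measure_maxEv_le D (hSmeas i) (hfmeas i) t)
  have hBle : ∀ t i, (μ (B t i)).toReal ≤ (((t : ℕ) : ℝ) + 1)⁻¹ :=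
    fun t i => htoReal _ t (measure_maxEv_le D (hSmeas i) (hfmeas i).neg t)
  set g : (Fin T → (Fin d → ℝ)) → ℝ := fun X => ∑ t : Fin T, ∑ i : Fin k,
      ((A t i).indicator (fun _ => (1:ℝ)) X + (B t i).indicator (fun _ => (1:ℝ)) X)
      with hg
  have hind : ∀ (s : Set (Fin T → (Fin d → ℝ))), MeasurableSet s →
      Integrable (s.indicator fun _ => (1:ℝ)) μ := fun s hs =>
    (integrable_indicator_iff hs).2 (integrableOn_const (measure_ne_top μ s))
  have hgint : Integrable g μ := integrable_finset_sum _ fun t _ =>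
    integrable_finset_sum _ fun i _ => (hind _ (hAmeas t i)).add (hind _ (hBmeas t i))
  have hU : MeasurableSet (⋃ i, S i) := MeasurableSet.iUnion fun i => hSmeas i
  have hnull : ∀ t : Fin T, μ ((fun X : Fin T → (Fin d → ℝ) => X t) ⁻¹' (⋃ i, S i)ᶜ) = 0 := by
    intro t
    have hpre : ((fun X : Fin T → (Fin d → ℝ) => X t) ⁻¹' (⋃ i, S i)ᶜ)
        = Set.pi Set.univ (fun s => if s = t then (⋃ i, S i)ᶜ else Set.univ) := by
      ext X
      simp only [Set.mem_preimage, Set.mem_pi, Set.mem_univ, forall_true_left]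
      constructor
      · intro h s
        by_cases hst : s = t
        · subst hst; simpa using h
        · simp [hst]
      · intro h; have := h t; simpa using this
    rw [hμdef, hpre, Measure.pi_pi]
    rw [Finset.prod_eq_single t (fun b _ hb => by simp [hb])
      (fun h => absurd (Finset.mem_univ t) h)]
    rw [if_pos rfl]
    rw [prob_compl_eq_zero_iff hU]
    exact hsupp
  have hae : ∀ᵐ X ∂μ, ∀ t : Fin T, X t ∈ ⋃ i, S i := by
    rw [ae_all_iff]
    intro t
    rw [ae_iff]
    exact hnull t
  have hptwise : ∀ X : Fin T → (Fin d → ℝ), (∀ t, X t ∈ ⋃ i, S i) →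
      ((Finset.univ.filter fun t : Fin T =>
        X t ∉ convexHull ℝ (X '' {s : Fin T | s < t})).card : ℝ) ≤ g X := by
    intro X hX
    rw [Finset.card_filter]
    push_cast
    refine Finset.sum_le_sum fun t _ => ?_
    by_cases hmis : X t ∉ convexHull ℝ (X '' {s : Fin T | s < t})
    · rw [if_pos hmis]
      obtain ⟨i, hi⟩ := Set.mem_iUnion.mp (hX t)
      have hclaim : X ∈ A t i ∨ X ∈ B t i := by
        by_contra hcon
        push_neg at hcon
        obtain ⟨hA', hB'⟩ := hcon
        have hA'' : ¬ (X t ∈ S i ∧ ∀ s, s ≤ t → s ≠ t → X s ∈ S i →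
            f i (X s) < f i (X t)) := hA'
        have hB'' : ¬ (X t ∈ S i ∧ ∀ s, s ≤ t → s ≠ t → X s ∈ S i →
            -(f i (X s)) < -(f i (X t))) := hB'
        push_neg at hA'' hB''
        obtain ⟨s1, hs1t, hs1ne, hs1S, hle1⟩ := hA'' hi
        obtain ⟨s2, hs2t, hs2ne, hs2S, hle2⟩ := hB'' hi
        rw [neg_le_neg_iff] at hle2
        have hseg : X t ∈ segment ℝ (X s2) (X s1) :=
          mem_segment_of_dotp_between hs2S hs1S hi hle2 hle1
        exact hmis (segment_subset_convexHull
          (Set.mem_image_of_mem X (show s2 ∈ {s : Fin T | s < t} from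
            lt_of_le_of_ne hs2t hs2ne))
          (Set.mem_image_of_mem X (show s1 ∈ {s : Fin T | s < t} from
            lt_of_le_of_ne hs1t hs1ne)) hseg)
      have hnn : ∀ i' : Fin k, 0 ≤ (A t i').indicator (fun _ => (1:ℝ)) X +
          (B t i').indicator (fun _ => (1:ℝ)) X := fun i' =>
        add_nonneg (Set.indicator_nonneg (fun _ _ => zero_le_one) X)
          (Set.indicator_nonneg (fun _ _ => zero_le_one) X)
      have hterm : (1:ℝ) ≤ (A t i).indicator (fun _ => (1:ℝ)) X +
          (B t i).indicator (fun _ => (1:ℝ)) X := by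
        rcases hclaim with h | h
        · rw [Set.indicator_of_mem h]
          have := Set.indicator_nonneg (s := B t i) (f := fun _ => (1:ℝ))
            (fun _ _ => zero_le_one) X
          linarith
        · rw [Set.indicator_of_mem h]
          have := Set.indicator_nonneg (s := A t i) (f := fun _ => (1:ℝ))
            (fun _ _ => zero_le_one) X
          linarith
      exact hterm.trans (Finset.single_le_sum (fun i' _ => hnn i') (Finset.mem_univ i))
    · rw [if_neg hmis]
      exact Finset.sum_nonneg fun i' _ =>
        add_nonneg (Set.indicator_nonneg (fun _ _ => zero_le_one) X)
          (Set.indicator_nonneg (fun _ _ => zero_le_one) X)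
  have hboundae : ∀ᵐ X ∂μ, ((Finset.univ.filter fun t : Fin T =>
      X t ∉ convexHull ℝ (X '' {s : Fin T | s < t})).card : ℝ) ≤ g X :=
    hae.mono hptwise
  have hnonneg : 0 ≤ᵐ[μ] fun X : Fin T → (Fin d → ℝ) =>
      ((Finset.univ.filter fun t : Fin T =>
        X t ∉ convexHull ℝ (X '' {s : Fin T | s < t})).card : ℝ) :=
    Filter.Eventually.of_forall fun X => Nat.cast_nonneg _
  calc ∫ X : Fin T → (Fin d → ℝ),
        ((Finset.univ.filter fun t : Fin T =>
          X t ∉ convexHull ℝ (X '' {s : Fin T | s < t})).card : ℝ) ∂μ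
      ≤ ∫ X, g X ∂μ := integral_mono_of_nonneg hnonneg hgint hboundae
    _ = ∫ X, (∑ t : Fin T, ∑ i : Fin k,
          ((A t i).indicator (fun _ => (1:ℝ)) X + (B t i).indicator (fun _ => (1:ℝ)) X)) ∂μ :=
        rfl
    _ = ∑ t : Fin T, ∑ i : Fin k, ((μ (A t i)).toReal + (μ (B t i)).toReal) := by
        have h1 : ∫ X, (∑ t : Fin T, ∑ i : Fin k,
              ((A t i).indicator (fun _ => (1:ℝ)) X + (B t i).indicator (fun _ => (1:ℝ)) X)) ∂μ
            = ∑ t : Fin T, ∫ X, (∑ i : Fin k,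
              ((A t i).indicator (fun _ => (1:ℝ)) X
                + (B t i).indicator (fun _ => (1:ℝ)) X)) ∂μ :=
          integral_finset_sum Finset.univ (fun t _ => integrable_finset_sum _ fun i _ =>
            (hind _ (hAmeas t i)).add (hind _ (hBmeas t i)))
        rw [h1]
        refine Finset.sum_congr rfl fun t _ => ?_
        have h2 : ∫ X, (∑ i : Fin k,
              ((A t i).indicator (fun _ => (1:ℝ)) X + (B t i).indicator (fun _ => (1:ℝ)) X)) ∂μ
            = ∑ i : Fin k, ∫ X,
              ((A t i).indicator (fun _ => (1:ℝ)) X + (B t i).indicator (fun _ => (1:ℝ)) X) ∂μ :=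
          integral_finset_sum Finset.univ (fun i _ =>
            (hind _ (hAmeas t i)).add (hind _ (hBmeas t i)))
        rw [h2]
        refine Finset.sum_congr rfl fun i _ => ?_
        have h3 : ∫ X, ((A t i).indicator (fun _ => (1:ℝ)) X
              + (B t i).indicator (fun _ => (1:ℝ)) X) ∂μ
            = (∫ X, (A t i).indicator (fun _ => (1:ℝ)) X ∂μ)
              + ∫ X, (B t i).indicator (fun _ => (1:ℝ)) X ∂μ :=
          integral_add (hind _ (hAmeas t i)) (hind _ (hBmeas t i))
        rw [h3, integral_indicator_const (1:ℝ) (hAmeas t i),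
          integral_indicator_const (1:ℝ) (hBmeas t i)]
        simp [Measure.real]
    _ ≤ ∑ t : Fin T, ∑ i : Fin k, ((((t : ℕ) : ℝ) + 1)⁻¹ + (((t : ℕ) : ℝ) + 1)⁻¹) :=
        Finset.sum_le_sum fun t _ => Finset.sum_le_sum fun i _ =>
          add_le_add (hAle t i) (hBle t i)
    _ = 2 * k * ∑ t : Fin T, (((t : ℕ) : ℝ) + 1)⁻¹ := by
        simp only [Finset.sum_const, Finset.card_univ, Fintype.card_fin,
          nsmul_eq_mul, Finset.mul_sum]
        refine Finset.sum_congr rfl fun t _ => by ring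
    _ ≤ 2 * k * (1 + Real.log T) := by
        refine mul_le_mul_of_nonneg_left ?_ (by positivity)
        calc ∑ t : Fin T, (((t : ℕ) : ℝ) + 1)⁻¹
            = ∑ i ∈ Finset.range T, (((i : ℕ) : ℝ) + 1)⁻¹ :=
              Fin.sum_univ_eq_sum_range (fun m => ((m : ℝ) + 1)⁻¹) T
          _ = (harmonic T : ℝ) := by
              rw [harmonic]
              push_cast
              rfl
          _ ≤ 1 + Real.log T := harmonic_le_one_add_log T
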